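/- arXiv:1105.5032 — 2 statements merged into one kernel-verified Lean document; each statement's English description precedes it below -/
import Mathlib

section
/- Let m ≥ 3, let C = {p, c_1, ..., c_{m−3}, a, b} be a set of m candidates, let n ≥ 1, and let k_1, ..., k_n be distinct positive integers with k_1 + ... + k_n = 2K for a positive integer K. Consider the weighted veto election over C whose voters are: for each candidate c ∈ C − {a, b}, one fixed voter of weight K who ranks c last; and n manipulators, where manipulator i has weight k_i and may cast any linear order on C. Then there exists a choice of the manipulators' preference orders under which p is a winner (no candidate has veto score strictly greater than p's) if and only if there exists a subset S ⊆ {1, ..., n} with Σ_{i∈S} k_i = K. -/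
variable {α : Type*} [DecidableEq α]

/-- `l` is a linear-order vote on the finite candidate set `s`:
a duplicate-free list containing exactly the elements of `s`;
earlier in the list means more preferred (for a societal axis `L`,
earlier in the list means smaller in the order `L`). -/
def IsVoteOn (s : Finset α) (l : List α) : Prop :=
  l.Nodup ∧ ∀ a, a ∈ l ↔ a ∈ s

/-- `a` is ranked strictly before `b` in the list `l`. -/
def Prefers (l : List α) (a b : α) : Prop :=
  l.idxOf a < l.idxOf b

instance (l : List α) (a b : α) : Decidable (Prefers l a b) :=
  inferInstanceAs (Decidable (_ < _))

/-- `v` is single-peaked with respect to the societal axis `L`. -/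
def SinglePeaked (L v : List α) : Prop :=
  ∀ c1 c2 c3, c1 ∈ L → c2 ∈ L → c3 ∈ L →
    ((Prefers L c1 c2 ∧ Prefers L c2 c3) ∨ (Prefers L c3 c2 ∧ Prefers L c2 c1)) →
    Prefers v c1 c2 → Prefers v c2 c3

/-- `v` is single-caved with respect to the societal axis `L`. -/
def SingleCaved (L v : List α) : Prop :=
  ∀ c1 c2 c3, c1 ∈ L → c2 ∈ L → c3 ∈ L →
    ((Prefers L c1 c2 ∧ Prefers L c2 c3) ∨ (Prefers L c3 c2 ∧ Prefers L c2 c1)) →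
    Prefers v c2 c1 → Prefers v c3 c2

/-- The restriction of a ranking/order `l` to the subset `C` of candidates. -/
def restrictList (C : Finset α) (l : List α) : List α :=
  l.filter (fun a => decide (a ∈ C))

/-- The plurality score of candidate `c` in the election with candidate set `C`
and votes `V` (each vote a linear order on a set containing `C`): the number of
votes whose most preferred candidate among `C` is `c`. -/
def pluralityScore (C : Finset α) (V : List (List α)) (c : α) : ℕ :=
  V.countP (fun v => decide ((restrictList C v).head? = some c))

/-- `p` is a plurality winner of the election `(C, V)`. -/
def PluralityWinner (C : Finset α) (V : List (List α)) (p : α) : Prop :=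
  p ∈ C ∧ ∀ c ∈ C, pluralityScore C V c ≤ pluralityScore C V p

/-- `l'` is obtained from `l` by one swap of adjacent elements. -/
def AdjSwap (l l' : List α) : Prop :=
  ∃ (u w : List α) (x y : α), l = u ++ x :: y :: w ∧ l' = u ++ y :: x :: w

/-- `WithinSwaps k l l'` : `l` can be transformed into `l'` by a sequence of at
most `k` adjacent swaps. -/
def WithinSwaps : ℕ → List α → List α → Prop
  | 0, l, l' => l = l'
  | (k+1), l, l' => l = l' ∨ ∃ l'', AdjSwap l l'' ∧ WithinSwaps k l'' l'

/-- `v` is swoon-SP w.r.t. axis `L` on candidate set `C`: the restriction of `v` to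
`C` minus `v`'s most preferred candidate is single-peaked with respect to the
restriction of `L` to that set. -/
def SwoonSP (C : Finset α) (L v : List α) : Prop :=
  ∀ t, v.head? = some t →
    SinglePeaked (restrictList (C.erase t) L) (restrictList (C.erase t) v)

/-- The `k`-radius neighborhood of `c` with respect to `C'` and the axis `L`:
if `C'`, listed in `L`-increasing order, is `d_1, ..., d_r` and `c = d_i`, this
is `{d_j : |i - j| ≤ k}`. -/
def nbhd (k : ℕ) (L : List α) (C' : Finset α) (c : α) : Finset α :=
  ((restrictList C' L).drop ((restrictList C' L).idxOf c - k)).take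
    ((restrictList C' L).idxOf c + k + 1 - ((restrictList C' L).idxOf c - k))
    |>.toFinset

/-- The plurality election `(C, V)` is `k`-local with respect to axis `L`. -/
def KLocal (k : ℕ) (L : List α) (C : Finset α) (V : List (List α)) : Prop :=
  ∀ C' ⊆ C, ∀ c ∈ C', pluralityScore (nbhd k L C' c) V c = pluralityScore C' V c

/-- In a `(a1, a2, 0)` scoring election over three candidates, the number of points
candidate `c` receives from (unit-weight) vote `v`. -/
def score3 (a1 a2 : ℕ) (v : List α) (c : α) : ℕ :=
  if v.idxOf c = 0 then a1 else if v.idxOf c = 1 then a2 else 0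

/-- Indicator that the vote `v` does not veto (rank last) candidate `c`. -/
def vetoInd (v : List α) (c : α) : ℕ :=
  if v.getLast? = some c then 0 else 1

/-- The approval score of `c` given approval ballots `W`. -/
def approvalScore {I : Type*} [Fintype I] (W : I → Finset α) (c : α) : ℕ :=
  (Finset.univ.filter fun i => c ∈ W i).card

/-- `p` is an approval winner of the election with candidate set `C` and ballots `W`. -/
def ApprovalWinner (C : Finset α) {I : Type*} [Fintype I] (W : I → Finset α) (p : α) : Prop :=
  p ∈ C ∧ ∀ c ∈ C, approvalScore W c ≤ approvalScore W p


lemma fixSum {α : Type*} [DecidableEq α] (D : Finset α) (F : α → List α) (K : ℕ)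
    (hF : ∀ d ∈ D, (F d).getLast? = some d) (c : α) :
    ∑ d ∈ D, K * vetoInd (F d) c = K * ((D.erase c).card) := by
  have h1 : ∀ d ∈ D, K * vetoInd (F d) c = if c ≠ d then K else 0 := by
    intro d hd
    unfold vetoInd
    rw [hF d hd]
    rcases eq_or_ne d c with h | h
    · simp [h]
    · simp [h, Ne.symm h]
  rw [Finset.sum_congr rfl h1, ← Finset.sum_filter, Finset.filter_ne, Finset.sum_const,
    smul_eq_mul, mul_comm]

lemma manipSum {α : Type*} [DecidableEq α] {n : ℕ} (kk : Fin n → ℕ) (σ : Fin n → List α) (c : α) :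
    ∑ i, kk i * vetoInd (σ i) c
      + ∑ i ∈ Finset.univ.filter (fun i => (σ i).getLast? = some c), kk i = ∑ i, kk i := by
  have h1 : ∀ i ∈ Finset.univ, kk i * vetoInd (σ i) c
      = if ¬ ((σ i).getLast? = some c) then kk i else 0 := by
    intro i _
    unfold vetoInd
    by_cases h : (σ i).getLast? = some c <;> simp [h]
  rw [Finset.sum_congr rfl h1, ← Finset.sum_filter, add_comm,
    Finset.sum_filter_add_sum_filter_not]

/-- Manipulation of weighted veto elections with the fixed voters being,
for each candidate `c ∈ C - {a, b}`, one weight-`K` voter ranking `c` last, encodes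
PARTITION: manipulators with weights `k_1, ..., k_n` can make `p` a winner iff some
subset of the `k_i` sums to `K`. -/
theorem veto_manipulation_iff_partition
    (C : Finset α) (hm : 3 ≤ C.card)
    (p a b : α) (hp : p ∈ C) (ha : a ∈ C) (hb : b ∈ C)
    (hpa : p ≠ a) (hpb : p ≠ b) (hab : a ≠ b)
    (F : α → List α)
    (hF : ∀ c ∈ C \ {a, b}, IsVoteOn C (F c) ∧ (F c).getLast? = some c)
    (n : ℕ) (hn : 1 ≤ n) (kk : Fin n → ℕ) (hinj : Function.Injective kk)
    (hpos : ∀ i, 0 < kk i) (K : ℕ) (hK : 0 < K) (hsum : ∑ i, kk i = 2 * K) :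
    (∃ σ : Fin n → List α, (∀ i, IsVoteOn C (σ i)) ∧
      (let sc : α → ℕ := fun c =>
        (∑ d ∈ C \ {a, b}, K * vetoInd (F d) c) + ∑ i, kk i * vetoInd (σ i) c
       ∀ c ∈ C, sc c ≤ sc p))
    ↔ ∃ S : Finset (Fin n), ∑ i ∈ S, kk i = K := by
  have hpD : p ∈ C \ {a, b} := by simp [hp, hpa, hpb]
  have haD : a ∉ C \ {a, b} := by simp
  have hbD : b ∉ C \ {a, b} := by simp
  have hcardD : 1 ≤ (C \ {a, b}).card := Finset.card_pos.2 ⟨p, hpD⟩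
  have hcardp : ((C \ {a, b}).erase p).card = (C \ {a, b}).card - 1 :=
    Finset.card_erase_of_mem hpD
  have hKmul : K * (C \ {a, b}).card = K * ((C \ {a, b}).erase p).card + K := by
    rw [hcardp]
    have h : (C \ {a, b}).card = ((C \ {a, b}).card - 1) + 1 := by omega
    conv_lhs => rw [h]
    rw [Nat.mul_add, mul_one]
  have hfix := fun c => fixSum (C \ {a, b}) F K (fun d hd => (hF d hd).2) c
  constructor
  · rintro ⟨σ, hIs, hw⟩
    have hw' : ∀ c ∈ C,
        (∑ d ∈ C \ {a, b}, K * vetoInd (F d) c) + ∑ i, kk i * vetoInd (σ i) c ≤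
        (∑ d ∈ C \ {a, b}, K * vetoInd (F d) p) + ∑ i, kk i * vetoInd (σ i) p := hw
    have hma := manipSum kk σ a
    have hmb := manipSum kk σ b
    have hmp := manipSum kk σ p
    rw [hsum] at hma hmb hmp
    have hdisj : Disjoint (Finset.univ.filter (fun i => (σ i).getLast? = some a))
        (Finset.univ.filter (fun i => (σ i).getLast? = some b)) := by
      rw [Finset.disjoint_left]
      intro i h1 h2
      rw [Finset.mem_filter] at h1 h2
      exact hab (Option.some.inj (h1.2.symm.trans h2.2))
    have hle : ∑ i ∈ Finset.univ.filter (fun i => (σ i).getLast? = some a), kk i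
        + ∑ i ∈ Finset.univ.filter (fun i => (σ i).getLast? = some b), kk i ≤ 2 * K := by
      rw [← Finset.sum_union hdisj, ← hsum]
      exact Finset.sum_le_sum_of_subset (Finset.subset_univ _)
    have hwa := hw' a ha
    have hwb := hw' b hb
    rw [hfix a, hfix p, Finset.erase_eq_of_notMem haD] at hwa
    rw [hfix b, hfix p, Finset.erase_eq_of_notMem hbD] at hwb
    exact ⟨Finset.univ.filter (fun i => (σ i).getLast? = some a), by omega⟩
  · rintro ⟨S, hS⟩
    have hSc : ∑ i ∈ Sᶜ, kk i = K := by
      have h := Finset.sum_add_sum_compl S kk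
      omega
    have hvote : ∀ x ∈ C, IsVoteOn C (C.toList.erase x ++ [x]) := by
      intro x hx
      have hxm : x ∈ C.toList := Finset.mem_toList.2 hx
      have hperm : (C.toList.erase x ++ [x]).Perm C.toList :=
        (List.perm_append_singleton x _).trans (List.perm_cons_erase hxm).symm
      exact ⟨hperm.nodup_iff.2 C.nodup_toList, fun y => hperm.mem_iff.trans Finset.mem_toList⟩
    refine ⟨fun i => if i ∈ S then C.toList.erase a ++ [a] else C.toList.erase b ++ [b],
      fun i => ?_, ?_⟩
    · by_cases h : i ∈ S <;> simp only [h, if_true, if_false]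
      · exact hvote a ha
      · exact hvote b hb
    · have hman : ∀ c', ∑ i, kk i * vetoInd
          ((fun i => if i ∈ S then C.toList.erase a ++ [a] else C.toList.erase b ++ [b]) i) c'
          = K * vetoInd (C.toList.erase a ++ [a]) c'
            + K * vetoInd (C.toList.erase b ++ [b]) c' := by
        intro c'
        have h1 : ∀ i ∈ Finset.univ, kk i * vetoInd
            ((fun i => if i ∈ S then C.toList.erase a ++ [a] else C.toList.erase b ++ [b]) i) c'
            = if i ∈ S then kk i * vetoInd (C.toList.erase a ++ [a]) c'
              else kk i * vetoInd (C.toList.erase b ++ [b]) c' := by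
          intro i _
          by_cases h : i ∈ S <;> simp [h]
        have hfn : Finset.univ.filter (fun i => ¬ i ∈ S) = Sᶜ := by
          ext i; simp
        rw [Finset.sum_congr rfl h1, Finset.sum_ite, Finset.filter_mem_eq_inter,
          Finset.univ_inter, hfn, ← Finset.sum_mul, ← Finset.sum_mul, hS, hSc]
      have hva : ∀ c', vetoInd (C.toList.erase a ++ [a]) c' = if a = c' then 0 else 1 := by
        intro c'
        unfold vetoInd
        rw [List.getLast?_concat]
        by_cases h : a = c' <;> simp [h]
      have hvb : ∀ c', vetoInd (C.toList.erase b ++ [b]) c' = if b = c' then 0 else 1 := by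
        intro c'
        unfold vetoInd
        rw [List.getLast?_concat]
        by_cases h : b = c' <;> simp [h]
      show ∀ c ∈ C,
        (∑ d ∈ C \ {a, b}, K * vetoInd (F d) c) + ∑ i, kk i * vetoInd
          ((fun i => if i ∈ S then C.toList.erase a ++ [a] else C.toList.erase b ++ [b]) i) c ≤
        (∑ d ∈ C \ {a, b}, K * vetoInd (F d) p) + ∑ i, kk i * vetoInd
          ((fun i => if i ∈ S then C.toList.erase a ++ [a] else C.toList.erase b ++ [b]) i) p
      intro c hc
      rw [hfix c, hfix p, hman c, hman p, hva c, hva p, hvb c, hvb p,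
        if_neg (Ne.symm hpa), if_neg (Ne.symm hpb)]
      by_cases hca : c = a
      · subst hca
        rw [if_pos rfl, if_neg (Ne.symm hab), Finset.erase_eq_of_notMem haD]
        omega
      · by_cases hcb : c = b
        · subst hcb
          rw [if_neg (fun h => hab h), if_pos rfl, Finset.erase_eq_of_notMem hbD]
          omega
        · have hcD : c ∈ C \ {a, b} := by simp [hc, hca, hcb]
          rw [if_neg (fun h => hca h.symm), if_neg (fun h => hcb h.symm),
            Finset.card_erase_of_mem hcD, hcardp]
end

section
/- Let C = {c_1, ..., c_m} with m ≥ 2 be a finite candidate set, let L be a linear order on C with c_1 L c_2 L ... L c_m, and let V be a finite collection of linear-order votes on C, each single-peaked with respect to L. Then in plurality voting: (1) the plurality score of c_1 in (C, V) equals the plurality score of c_1 in ({c_1, c_2}, V); (2) for each i with 2 ≤ i ≤ m − 1, the plurality score of c_i in (C, V) equals the plurality score of c_i in ({c_{i−1}, c_i, c_{i+1}}, V); and (3) the plurality score of c_m in (C, V) equals the plurality score of c_m in ({c_{m−1}, c_m}, V). -/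
variable {α : Type*} [DecidableEq α]

lemma head_filter_iff (p : α → Bool) (l : List α) (c : α) :
    (l.filter p).head? = some c ↔
      c ∈ l ∧ p c = true ∧ ∀ b ∈ l, p b = true → l.idxOf c ≤ l.idxOf b := by
  induction l with
  | nil => simp
  | cons a t ih =>
    by_cases hpa : p a = true
    · simp only [List.filter_cons_of_pos hpa, List.head?_cons, Option.some_inj]
      constructor
      · rintro rfl
        refine ⟨List.mem_cons_self, hpa, fun b hb hpb => by simp [List.idxOf_cons_self]⟩
      · rintro ⟨hc, hpc, hmin⟩
        by_contra hne
        have hca : c ≠ a := fun h => hne h.symm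
        have := hmin a (List.mem_cons_self) hpa
        rw [List.idxOf_cons_self, List.idxOf_cons_ne _ (Ne.symm hca)] at this
        omega
    · simp only [List.filter_cons_of_neg hpa, ih]
      constructor
      · rintro ⟨hc, hpc, hmin⟩
        have hca : c ≠ a := fun h => hpa (h ▸ hpc)
        refine ⟨List.mem_cons_of_mem _ hc, hpc, fun b hb hpb => ?_⟩
        have hba : b ≠ a := fun h => hpa (h ▸ hpb)
        rcases List.mem_cons.mp hb with h | h
        · exact absurd h hba
        · rw [List.idxOf_cons_ne _ (Ne.symm hca), List.idxOf_cons_ne _ (Ne.symm hba)]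
          exact Nat.succ_le_succ (hmin b h hpb)
      · rintro ⟨hc, hpc, hmin⟩
        have hca : c ≠ a := fun h => hpa (h ▸ hpc)
        have hc' : c ∈ t := (List.mem_cons.mp hc).resolve_left hca
        refine ⟨hc', hpc, fun b hb hpb => ?_⟩
        have hba : b ≠ a := fun h => hpa (h ▸ hpb)
        have := hmin b (List.mem_cons_of_mem _ hb) hpb
        rwa [List.idxOf_cons_ne _ (Ne.symm hca), List.idxOf_cons_ne _ (Ne.symm hba),
          Nat.succ_le_succ_iff] at this

lemma head_iff_of_mem {l : List α} {c : α} (hc : c ∈ l) :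
    l.head? = some c ↔ l.idxOf c = 0 := by
  cases l with
  | nil => simp at hc
  | cons a t =>
    simp only [List.head?_cons, Option.some_inj]
    constructor
    · rintro rfl; exact List.idxOf_cons_self
    · intro h
      by_contra hne
      rw [List.idxOf_cons_ne _ hne] at h
      exact Nat.succ_ne_zero _ h

lemma key_lemma (C : Finset α) (L v : List α) (hv : IsVoteOn C v)
    (hsp : SinglePeaked L v) (hLmem : ∀ a, a ∈ L ↔ a ∈ C)
    (S : Finset α) (hS : ∀ a ∈ S, a ∈ C) (c : α) (hc : c ∈ S)
    (hnb : ∀ t ∈ C, t ∉ S → ∃ s ∈ S, s ≠ c ∧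
      ((Prefers L t s ∧ Prefers L s c) ∨ (Prefers L c s ∧ Prefers L s t))) :
    ((restrictList C v).head? = some c ↔ (restrictList S v).head? = some c) := by
  obtain ⟨hnd, hmem⟩ := hv
  have hcv : c ∈ v := (hmem c).mpr (hS c hc)
  rw [restrictList, restrictList, head_filter_iff, head_filter_iff]
  simp only [decide_eq_true_eq]
  constructor
  · rintro ⟨_, _, hmin⟩
    exact ⟨hcv, hc, fun b hb _ => hmin b hb ((hmem b).mp hb)⟩
  · rintro ⟨_, _, hmin⟩
    refine ⟨hcv, hS c hc, fun b hb _ => ?_⟩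
    -- let t be v's top
    obtain ⟨t, ht⟩ : ∃ t, v.head? = some t := by
      cases v with
      | nil => simp at hcv
      | cons a t => exact ⟨a, rfl⟩
    have htv : t ∈ v := List.mem_of_mem_head? ht
    have hti : v.idxOf t = 0 := (head_iff_of_mem htv).mp ht
    have htop : ∀ b, v.idxOf t ≤ v.idxOf b := by intro b; omega
    -- claim t = c
    have htc : t = c := by
      by_contra htc
      by_cases htS : t ∈ S
      · have h1 := hmin t htv htS
        have : v.idxOf c = 0 := by omega
        exact htc (Option.some_inj.mp (ht.symm.trans ((head_iff_of_mem hcv).mpr this)))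
      · obtain ⟨s, hsS, hsc, hbetween⟩ := hnb t ((hmem t).mp htv) htS
        have hsv : s ∈ v := (hmem s).mpr (hS s hsS)
        have hst : s ≠ t := fun h => htS (h ▸ hsS)
        have hsi : 0 < v.idxOf s := by
          rcases Nat.eq_zero_or_pos (v.idxOf s) with h | h
          · exact absurd (Option.some_inj.mp
              (ht.symm.trans ((head_iff_of_mem hsv).mpr h))).symm hst
          · exact h
        have hprefts : Prefers v t s := by unfold Prefers; omega
        have htL : t ∈ L := (hLmem t).mpr ((hmem t).mp htv)
        have hsL : s ∈ L := (hLmem s).mpr (hS s hsS)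
        have hcL : c ∈ L := (hLmem c).mpr (hS c hc)
        have hpsc : Prefers v s c := hsp t s c htL hsL hcL (by tauto) hprefts
        have := hmin s hsv hsS
        unfold Prefers at hpsc
        omega
    subst htc
    omega

/-- Lemma 3.4 of FHHR: in a single-peaked plurality election with axis
`c_1 L c_2 L ... L c_m`, `m ≥ 2`: (1) `c_1`'s plurality score in `(C, V)` equals its
score in `({c_1, c_2}, V)`; (2) for `2 ≤ i ≤ m - 1`, `c_i`'s score in `(C, V)` equals
its score in `({c_{i-1}, c_i, c_{i+1}}, V)`; (3) `c_m`'s score in `(C, V)` equals its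
score in `({c_{m-1}, c_m}, V)`. -/
theorem singlePeaked_plurality_local
    (C : Finset α) (L : List α) (hL : IsVoteOn C L) (hm : 2 ≤ L.length)
    (V : List (List α)) (hV : ∀ v ∈ V, IsVoteOn C v ∧ SinglePeaked L v) :
    (pluralityScore C V (L[0]'(by omega)) =
        pluralityScore {L[0]'(by omega), L[1]'(by omega)} V (L[0]'(by omega))) ∧
    (∀ j, ∀ hj : j + 1 < L.length, 1 ≤ j →
      pluralityScore C V (L[j]'(by omega)) =
        pluralityScore {L[j - 1]'(by omega), L[j]'(by omega), L[j + 1]'hj} V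
          (L[j]'(by omega))) ∧
    (pluralityScore C V (L[L.length - 1]'(by omega)) =
        pluralityScore {L[L.length - 2]'(by omega), L[L.length - 1]'(by omega)} V
          (L[L.length - 1]'(by omega))) := by
  obtain ⟨hLnd, hLmem⟩ := hL
  have hidx : ∀ (i : ℕ) (h : i < L.length), L.idxOf (L[i]'h) = i :=
    fun i h => List.Nodup.idxOf_getElem hLnd i h
  have hinj : ∀ (i j : ℕ) (hi : i < L.length) (hj : j < L.length),
      (L[i]'hi) = (L[j]'hj) → i = j := by
    intro i j hi hj h
    have := hidx i hi
    rw [h, hidx j hj] at this; omega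
  have hget : ∀ (i : ℕ) (h : i < L.length), (L[i]'h) ∈ C :=
    fun i h => (hLmem _).mp (List.getElem_mem _)
  have hPref : ∀ (i j : ℕ) (hi : i < L.length) (hj : j < L.length), i < j →
      Prefers L (L[i]'hi) (L[j]'hj) := by
    intro i j hi hj hij
    unfold Prefers; rw [hidx i hi, hidx j hj]; exact hij
  have main : ∀ (S : Finset α) (c : α), (∀ a ∈ S, a ∈ C) → c ∈ S →
      (∀ t ∈ C, t ∉ S → ∃ s ∈ S, s ≠ c ∧
        ((Prefers L t s ∧ Prefers L s c) ∨ (Prefers L c s ∧ Prefers L s t))) →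
      pluralityScore C V c = pluralityScore S V c := by
    intro S c hS hc hnb
    unfold pluralityScore
    apply List.countP_congr
    intro v hvV
    obtain ⟨hv, hsp⟩ := hV v hvV
    have := key_lemma C L v hv hsp hLmem S hS c hc hnb
    simpa using this
  refine ⟨?_, ?_, ?_⟩
  · apply main
    · intro a ha
      simp only [Finset.mem_insert, Finset.mem_singleton] at ha
      rcases ha with rfl | rfl <;> exact hget _ _
    · simp
    · intro t htC htS
      obtain ⟨i, hi, rfl⟩ := List.mem_iff_getElem.mp ((hLmem t).mpr htC)
      simp only [Finset.mem_insert, Finset.mem_singleton, not_or] at htS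
      have hi0 : i ≠ 0 := fun h => htS.1 (by subst h; rfl)
      have hi1 : i ≠ 1 := fun h => htS.2 (by subst h; rfl)
      refine ⟨L[1]'(by omega), by simp, ?_, Or.inr ⟨hPref 0 1 _ _ one_pos, hPref 1 i _ _ (by omega)⟩⟩
      intro h; have := hinj 1 0 (by omega) (by omega) h; omega
  · intro j hj hj1
    apply main
    · intro a ha
      simp only [Finset.mem_insert, Finset.mem_singleton] at ha
      rcases ha with rfl | rfl | rfl <;> exact hget _ _
    · simp
    · intro t htC htS
      obtain ⟨i, hi, rfl⟩ := List.mem_iff_getElem.mp ((hLmem t).mpr htC)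
      simp only [Finset.mem_insert, Finset.mem_singleton, not_or] at htS
      have him : i ≠ j - 1 := fun h => htS.1 (by subst h; rfl)
      have hij : i ≠ j := fun h => htS.2.1 (by subst h; rfl)
      have hip : i ≠ j + 1 := fun h => htS.2.2 (by subst h; rfl)
      by_cases hlt : i < j
      · refine ⟨L[j-1]'(by omega), by simp, fun h => ?_,
          Or.inl ⟨hPref i (j-1) _ _ (by omega), hPref (j-1) j _ _ (by omega)⟩⟩
        have := hinj (j-1) j (by omega) (by omega) h; omega
      · refine ⟨L[j+1]'hj, by simp, fun h => ?_,
          Or.inr ⟨hPref j (j+1) _ _ (by omega), hPref (j+1) i _ _ (by omega)⟩⟩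
        have := hinj (j+1) j (by omega) (by omega) h; omega
  · apply main
    · intro a ha
      simp only [Finset.mem_insert, Finset.mem_singleton] at ha
      rcases ha with rfl | rfl <;> exact hget _ _
    · simp
    · intro t htC htS
      obtain ⟨i, hi, rfl⟩ := List.mem_iff_getElem.mp ((hLmem t).mpr htC)
      simp only [Finset.mem_insert, Finset.mem_singleton, not_or] at htS
      have h1 : i ≠ L.length - 2 := fun h => htS.1 (by subst h; rfl)
      have h2 : i ≠ L.length - 1 := fun h => htS.2 (by subst h; rfl)
      refine ⟨L[L.length-2]'(by omega), by simp, fun h => ?_,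
        Or.inl ⟨hPref i (L.length-2) _ _ (by omega), hPref (L.length-2) (L.length-1) _ _ (by omega)⟩⟩
      have := hinj (L.length-2) (L.length-1) (by omega) (by omega) h; omega
end
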